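/- arXiv:2306.17377 — 2 statements merged into one kernel-verified Lean document; each statement's English description precedes it below -/
import Mathlib

section
/- For every real-valued $2\pi$-periodic trigonometric polynomial $y$ and all real constants $c, g_0$, the pointwise identity $\partial_u\big(\hat S y\big) = \hat S_1(y)\,(\partial_u y)$ holds, where $\hat S$ is the Babenko operator and $\hat S_1(y)$ its linearization. -/
open MeasureTheory
open scoped Real

/-- A trigonometric polynomial `u ↦ ∑ₖ aₖ e^{iku}`, represented by its finitely supported
Fourier coefficients; multiplication of coefficients is convolution, which corresponds to
pointwise multiplication of the associated functions. -/
abbrev TrigPoly : Type := AddMonoidAlgebra ℂ ℤ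

/-- Evaluation of a trigonometric polynomial: `teval c u = ∑ k, c k * exp (i k u)`. -/
noncomputable def teval (c : TrigPoly) (u : ℝ) : ℂ :=
  Finsupp.sum c.coeff fun k a => a * Complex.exp (Complex.I * (k : ℂ) * (u : ℂ))

/-- The Fourier multiplier operator with symbol `m`. -/
noncomputable def mulOp (m : ℤ → ℂ) (c : TrigPoly) : TrigPoly :=
  Finsupp.sum c.coeff fun k a => AddMonoidAlgebra.single k (m k * a)

/-- The circular Hilbert transform `Ĥ e^{iku} = i sign(k) e^{iku}` (with `sign 0 = 0`). -/
noncomputable def Hop : TrigPoly → TrigPoly := mulOp fun k => Complex.I * (Int.sign k : ℂ)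

/-- The operator `k̂ e^{iku} = |k| e^{iku}`. -/
noncomputable def Kop : TrigPoly → TrigPoly := mulOp fun k => ((|k| : ℤ) : ℂ)

/-- Differentiation `∂ᵤ e^{iku} = i k e^{iku}`. -/
noncomputable def Dop : TrigPoly → TrigPoly := mulOp fun k => Complex.I * (k : ℂ)

/-- A trigonometric polynomial is real-valued. -/
def RealValued (c : TrigPoly) : Prop := ∀ u : ℝ, (teval c u).im = 0
/-- The Babenko operator `Ŝ y = c²k̂y - g₀[ xᵤ y - Ĥ(y yᵤ) ]` with `xᵤ = 1 + k̂y`,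
`yᵤ = ∂ᵤ y`. -/
noncomputable def Sop (c g0 : ℝ) (y : TrigPoly) : TrigPoly :=
  (c ^ 2 : ℂ) • Kop y - (g0 : ℂ) • ((1 + Kop y) * y - Hop (y * Dop y))

/-- The linearized Babenko operator
`Ŝ₁(y) f = (c²k̂ - g₀)f - g₀[ y (k̂f) + f (k̂y) + k̂(yf) ]`. -/
noncomputable def S1op (c g0 : ℝ) (y f : TrigPoly) : TrigPoly :=
  (c ^ 2 : ℂ) • Kop f - (g0 : ℂ) • f
    - (g0 : ℂ) • (y * Kop f + f * Kop y + Kop (y * f))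

section Aux

lemma mulOp_zero (m : ℤ → ℂ) : mulOp m 0 = 0 := Finsupp.sum_zero_index

lemma mulOp_single (m : ℤ → ℂ) (k : ℤ) (a : ℂ) :
    mulOp m (AddMonoidAlgebra.single k a) = AddMonoidAlgebra.single k (m k * a) := by
  unfold mulOp
  rw [AddMonoidAlgebra.coeff_single, Finsupp.sum_single_index]
  simp

lemma mulOp_add (m : ℤ → ℂ) (x y : TrigPoly) :
    mulOp m (x + y) = mulOp m x + mulOp m y := by
  unfold mulOp
  rw [AddMonoidAlgebra.coeff_add]
  apply Finsupp.sum_add_index' <;> intro k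
  · simp
  · intro a b; rw [mul_add, AddMonoidAlgebra.single_add]

lemma mulOp_smul (m : ℤ → ℂ) (s : ℂ) (x : TrigPoly) :
    mulOp m (s • x) = s • mulOp m x := by
  unfold mulOp
  rw [AddMonoidAlgebra.coeff_smul, Finsupp.sum_smul_index (by simp)]
  rw [Finsupp.smul_sum]
  apply Finsupp.sum_congr
  intro k _
  rw [AddMonoidAlgebra.smul_single, smul_eq_mul]
  congr 1
  ring

lemma mulOp_mulOp (m₁ m₂ : ℤ → ℂ) (x : TrigPoly) :
    mulOp m₁ (mulOp m₂ x) = mulOp (fun k => m₁ k * m₂ k) x := by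
  induction x using AddMonoidAlgebra.induction with
  | zero => simp [mulOp_zero]
  | single_add k a f _ _ ih =>
    rw [mulOp_add, mulOp_add, mulOp_single, mulOp_single, ih, mulOp_add, mulOp_single,
      mul_assoc]

lemma mulOp_single_mul {m : ℤ → ℂ} (hm : ∀ k l, m (k + l) = m k + m l)
    (k : ℤ) (a : ℂ) (y : TrigPoly) :
    mulOp m (AddMonoidAlgebra.single k a * y)
      = AddMonoidAlgebra.single k (m k * a) * y
        + AddMonoidAlgebra.single k a * mulOp m y := by
  induction y using AddMonoidAlgebra.induction with
  | zero => simp [mulOp_zero]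
  | single_add l b g _ _ ih =>
    rw [mul_add, mulOp_add, ih, mulOp_add, mul_add, mul_add,
      AddMonoidAlgebra.single_mul_single, mulOp_single, mulOp_single,
      AddMonoidAlgebra.single_mul_single, AddMonoidAlgebra.single_mul_single, hm,
      show (m k + m l) * (a * b) = m k * a * b + a * (m l * b) from by ring,
      AddMonoidAlgebra.single_add]
    abel

lemma mulOp_mul {m : ℤ → ℂ} (hm : ∀ k l, m (k + l) = m k + m l) (x y : TrigPoly) :
    mulOp m (x * y) = mulOp m x * y + x * mulOp m y := by
  induction x using AddMonoidAlgebra.induction with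
  | zero => simp [mulOp_zero]
  | single_add k a f _ _ ih =>
    rw [add_mul, mulOp_add, ih, mulOp_add, mulOp_single, mulOp_single_mul hm,
      add_mul, add_mul]
    abel

lemma Dop_additive : ∀ k l : ℤ, Complex.I * ((k + l : ℤ) : ℂ)
    = Complex.I * (k : ℂ) + Complex.I * (l : ℂ) := by
  intro k l; push_cast; ring

lemma Dop_mul (x y : TrigPoly) : Dop (x * y) = Dop x * y + x * Dop y :=
  mulOp_mul Dop_additive x y

lemma Dop_add (x y : TrigPoly) : Dop (x + y) = Dop x + Dop y := mulOp_add _ x y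

lemma Dop_smul (s : ℂ) (x : TrigPoly) : Dop (s • x) = s • Dop x := mulOp_smul _ s x

lemma Dop_neg (x : TrigPoly) : Dop (-x) = - Dop x := by
  rw [← neg_one_smul ℂ x, Dop_smul, neg_one_smul]

lemma Dop_sub (x y : TrigPoly) : Dop (x - y) = Dop x - Dop y := by
  rw [sub_eq_add_neg, Dop_add, Dop_neg, sub_eq_add_neg]

lemma Dop_one : Dop (1 : TrigPoly) = 0 := by
  have : (1 : TrigPoly) = AddMonoidAlgebra.single 0 1 := rfl
  rw [this, Dop, mulOp_single]
  simp

lemma Dop_Kop (x : TrigPoly) : Dop (Kop x) = Kop (Dop x) := by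
  unfold Dop Kop
  rw [mulOp_mulOp, mulOp_mulOp]
  congr 1; funext k; ring

lemma Dop_Hop (x : TrigPoly) : Dop (Hop x) = - Kop x := by
  have hsym : ∀ k : ℤ, Complex.I * (k : ℂ) * (Complex.I * (Int.sign k : ℂ))
      = -(((|k| : ℤ) : ℂ)) := by
    intro k
    have h : (k : ℂ) * (Int.sign k : ℂ) = ((|k| : ℤ) : ℂ) := by
      rw [← Int.cast_mul, Int.mul_sign_self, Int.abs_eq_natAbs]
    calc Complex.I * (k : ℂ) * (Complex.I * (Int.sign k : ℂ))
        = (Complex.I * Complex.I) * ((k : ℂ) * (Int.sign k : ℂ)) := by ring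
      _ = -(((|k| : ℤ) : ℂ)) := by rw [Complex.I_mul_I, h]; ring
  unfold Dop Hop Kop
  rw [mulOp_mulOp]
  induction x using AddMonoidAlgebra.induction with
  | zero => simp [mulOp_zero]
  | single_add k a f _ _ ih =>
    rw [mulOp_add, mulOp_add, mulOp_single, mulOp_single, ih, hsym k, neg_add,
      neg_mul, AddMonoidAlgebra.single_neg]

end Aux

/-- Pointwise identity `∂ᵤ(Ŝ y) = Ŝ₁(y)(∂ᵤ y)` for every real-valued 2π-periodic trigonometric
polynomial y and all real constants c, g₀. -/
theorem deriv_Babenko_eq_linearization_of_deriv (c g0 : ℝ) (y : TrigPoly)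
    (hy : RealValued y) :
    ∀ u : ℝ, teval (Dop (Sop c g0 y)) u = teval (S1op c g0 y (Dop y)) u := by
  have h : Dop (Sop c g0 y) = S1op c g0 y (Dop y) := by
    simp only [Sop, S1op, Dop_sub, Dop_smul, Dop_mul, Dop_add, Dop_one, Dop_Kop, Dop_Hop,
      zero_mul, add_zero, zero_add, add_mul, one_mul, sub_neg_eq_add,
      mul_comm (Kop (Dop y)) y, mul_comm (Dop y) (Kop y)]
    module
  intro u; rw [h]
end

section
/- Hardy-space property of the auxiliary conformal map: for $0 < L \le 1$, let $u(q) = 2\arctan\big(L\tan(q/2)\big)$ for $q \in (-\pi,\pi)$, extended by $u(\pm\pi) = \pm\pi$. Then for all integers $k \ge 1$ and $n \ge 1$, $\int_{-\pi}^{\pi} e^{i k\, u(q)}\, e^{i n q}\, dq = 0$; i.e., every negative-frequency Fourier coefficient of the $2\pi$-periodic function $q \mapsto e^{iku(q)}$ vanishes. -/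
open scoped Real
open Complex

lemma exp_two_arctan (t : ℝ) :
    Complex.exp (2 * (Real.arctan t : ℂ) * I) = (1 + t * I) / (1 - t * I) := by
  have h1 : (1 : ℂ) - t * I ≠ 0 := by
    intro h
    have := congrArg Complex.re h
    simp at this
  set a := Real.arctan t with ha
  have hsq : Real.sqrt (1 + t ^ 2) ^ 2 = 1 + t ^ 2 := by
    rw [Real.sq_sqrt]; positivity
  have hs : Real.sqrt (1 + t ^ 2) ≠ 0 := by positivity
  have hexp : Complex.exp ((a : ℂ) * I) = (Real.cos a : ℂ) + (Real.sin a : ℂ) * I := by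
    rw [Complex.exp_mul_I]; push_cast; ring
  have h2 : Complex.exp (2 * (a : ℂ) * I) = ((Real.cos a : ℂ) + (Real.sin a : ℂ) * I) ^ 2 := by
    rw [show (2:ℂ) * a * I = a*I + a*I by ring, Complex.exp_add, hexp, sq]
  rw [h2, Real.cos_arctan, Real.sin_arctan]
  have hmul : ((1 : ℂ) - t * I) * (1 + t * I) = ((1 + t^2 : ℝ) : ℂ) := by
    push_cast
    rw [show ((1:ℂ) - t*I) * (1 + t*I) = 1 - (t:ℂ)^2 * I^2 by ring, Complex.I_sq]
    ring
  have hsc : ((Real.sqrt (1 + t^2) : ℝ) : ℂ) ^ 2 = ((1 + t^2 : ℝ) : ℂ) := by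
    rw [← Complex.ofReal_pow, hsq]
  have hne : ((1 + t^2 : ℝ) : ℂ) ≠ 0 := by
    simp only [ne_eq, Complex.ofReal_eq_zero]
    positivity
  have hlhs : (((1 / Real.sqrt (1 + t^2) : ℝ) : ℂ) + ((t / Real.sqrt (1 + t^2) : ℝ) : ℂ) * I) ^ 2
      = (1 + t * I) ^ 2 / ((Real.sqrt (1 + t^2) : ℝ) : ℂ) ^ 2 := by
    have hsC : ((Real.sqrt (1 + t^2) : ℝ) : ℂ) ≠ 0 := by
      simp only [ne_eq, Complex.ofReal_eq_zero]; exact hs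
    push_cast
    field_simp
  rw [hlhs, hsc, div_eq_div_iff hne h1]
  linear_combination (1 + (t:ℂ)*I) * hmul

lemma den_ne_zero {L : ℝ} (hL0 : 0 < L) (hL1 : L ≤ 1) {z : ℂ} (hz : ‖z‖ ≤ 1) :
    ((1 - L : ℝ) : ℂ) * z + ((1 + L : ℝ) : ℂ) ≠ 0 := by
  intro h
  have h2 : ((1 + L : ℝ) : ℂ) = -(((1 - L : ℝ) : ℂ) * z) := by linear_combination h
  have h3 : (1 + L : ℝ) = |1 - L| * ‖z‖ := by
    have h5 := congrArg norm h2
    rw [norm_neg, norm_mul, Complex.norm_real, Complex.norm_real, Real.norm_eq_abs, Real.norm_eq_abs,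
      abs_of_pos (by linarith : (0:ℝ) < 1 + L)] at h5
    exact h5
  have h4 : |1 - L| * ‖z‖ ≤ 1 - L := by
    have : |1 - L| = 1 - L := abs_of_nonneg (by linarith)
    rw [this]
    nlinarith [norm_nonneg z]
  linarith

lemma mobius_calc {L : ℝ} (hL0 : 0 < L) (hL1 : L ≤ 1) (s : ℝ) :
    (((1 + L : ℝ) : ℂ) * ((1 + s * I) / (1 - s * I)) + ((1 - L : ℝ) : ℂ))
      / (((1 - L : ℝ) : ℂ) * ((1 + s * I) / (1 - s * I)) + ((1 + L : ℝ) : ℂ))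
      = (1 + (L * s : ℝ) * I) / (1 - (L * s : ℝ) * I) := by
  have h1 : (1 : ℂ) - s * I ≠ 0 := by
    intro h; have := congrArg Complex.re h; simp at this
  have h2 : (1 : ℂ) - (L * s : ℝ) * I ≠ 0 := by
    intro h; have := congrArg Complex.re h; simp at this
  have hz : ‖(1 + (s:ℂ) * I) / (1 - s * I)‖ ≤ 1 := by
    rw [norm_div]
    have : ‖1 + (s:ℂ) * I‖ = ‖1 - (s:ℂ) * I‖ := by
      rw [show (1:ℂ) + s*I = starRingEnd ℂ (1 - s*I) by
        rw [map_sub, map_mul, Complex.conj_I, Complex.conj_ofReal, map_one]; ring]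
      exact Complex.norm_conj _
    rw [this, div_self]
    exact norm_ne_zero_iff.mpr h1
  have hden := den_ne_zero hL0 hL1 hz
  rw [div_eq_div_iff hden h2]
  push_cast
  field_simp
  ring

lemma key_identity {L : ℝ} (hL0 : 0 < L) (hL1 : L ≤ 1) {q : ℝ}
    (hq1 : -π ≤ q) (hq2 : q ≤ π) :
    Complex.exp (((if q = π then π else if q = -π then -π
        else 2 * Real.arctan (L * Real.tan (q / 2)) : ℝ) : ℂ) * I)
      = ((1 + (L:ℂ)) * Complex.exp ((q:ℂ)*I) + (1 - (L:ℂ)))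
        / ((1 - (L:ℂ)) * Complex.exp ((q:ℂ)*I) + (1 + (L:ℂ))) := by
  have h2L : ((2 * L : ℝ) : ℂ) ≠ 0 := by
    simp only [ne_eq, Complex.ofReal_eq_zero]; positivity
  by_cases hpi : q = π
  · subst hpi
    rw [if_pos rfl]
    rw [Complex.exp_pi_mul_I]
    rw [eq_div_iff (by intro h; apply h2L; rw [← h]; push_cast; ring)]
    ring
  by_cases hnpi : q = -π
  · subst hnpi
    rw [if_neg hpi, if_pos rfl]
    have he : Complex.exp (((-π : ℝ) : ℂ) * I) = -1 := by
      rw [show (((-π : ℝ) : ℂ) * I) = -((π:ℝ) * I) by push_cast; ring,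
        Complex.exp_neg, Complex.exp_pi_mul_I]
      norm_num
    rw [he]
    rw [eq_div_iff (by intro h; apply h2L; rw [← h]; push_cast; ring)]
    ring
  · rw [if_neg hpi, if_neg hnpi]
    have hlt1 : -π < q := lt_of_le_of_ne hq1 (Ne.symm hnpi)
    have hlt2 : q < π := lt_of_le_of_ne hq2 hpi
    set s := Real.tan (q / 2) with hs
    have hq : q / 2 = Real.arctan s := (Real.arctan_tan (by linarith) (by linarith)).symm
    have hexpq : Complex.exp ((q:ℂ) * I) = (1 + s * I) / (1 - s * I) := by
      rw [show (q:ℂ) * I = 2 * ((q/2 : ℝ):ℂ) * I by push_cast; ring, hq]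
      exact exp_two_arctan s
    have hexpu : Complex.exp (((2 * Real.arctan (L * s) : ℝ) : ℂ) * I)
        = (1 + (L * s : ℝ) * I) / (1 - (L * s : ℝ) * I) := by
      rw [show (((2 * Real.arctan (L * s) : ℝ) : ℂ) * I)
          = 2 * ((Real.arctan (L * s) : ℝ):ℂ) * I by push_cast; ring]
      exact exp_two_arctan (L * s)
    rw [hexpu, hexpq]
    have := mobius_calc hL0 hL1 s
    push_cast at this ⊢
    exact this.symm

/-- Hardy-space property of the auxiliary conformal map: for 0 < L ≤ 1 and
`u(q) = 2 arctan(L tan(q/2))` on (-π, π), extended by `u(±π) = ±π`, every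
negative-frequency Fourier coefficient of the 2π-periodic function `q ↦ e^{iku(q)}`
vanishes: `∫_{-π}^{π} e^{iku(q)} e^{inq} dq = 0` for all integers k ≥ 1 and n ≥ 1. -/
theorem auxiliary_conformal_map_hardy (L : ℝ) (hL0 : 0 < L) (hL1 : L ≤ 1)
    (k n : ℤ) (hk : 1 ≤ k) (hn : 1 ≤ n) :
    let u : ℝ → ℝ := fun q =>
      if q = π then π else if q = -π then -π else 2 * Real.arctan (L * Real.tan (q / 2))
    ∫ q in (-π)..π,
        Complex.exp (Complex.I * (k : ℂ) * (u q : ℂ))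
          * Complex.exp (Complex.I * (n : ℂ) * (q : ℂ)) = 0 := by
  intro u
  have hpi := Real.pi_pos
  obtain ⟨K, hKk⟩ : ∃ K : ℕ, k = (K : ℤ) :=
    ⟨k.toNat, (Int.toNat_of_nonneg (by linarith)).symm⟩
  obtain ⟨M, hMn⟩ : ∃ M : ℕ, n = ((M : ℤ) + 1) := by
    refine ⟨(n - 1).toNat, ?_⟩
    have : ((n - 1).toNat : ℤ) = n - 1 := Int.toNat_of_nonneg (by linarith)
    omega
  set num : ℂ → ℂ := fun z => (1 + (L:ℂ)) * z + (1 - (L:ℂ)) with hnum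
  set den : ℂ → ℂ := fun z => (1 - (L:ℂ)) * z + (1 + (L:ℂ)) with hden
  set g : ℝ → ℂ := fun q => (num (Complex.exp ((q:ℂ) * I)) / den (Complex.exp ((q:ℂ) * I))) ^ K
      * Complex.exp ((q:ℂ) * I) ^ (M + 1) with hg
  have habs : ∀ q : ℝ, ‖Complex.exp ((q:ℂ) * I)‖ ≤ 1 := by
    intro q
    rw [Complex.norm_exp]
    simp
  have hden_ne : ∀ z : ℂ, ‖z‖ ≤ 1 → den z ≠ 0 := by
    intro z hz
    have := den_ne_zero hL0 hL1 hz
    push_cast at this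
    simpa [hden] using this
  -- Step 1: rewrite integrand
  have step1 : (∫ q in (-π)..π, Complex.exp (Complex.I * (k:ℂ) * (u q : ℂ))
      * Complex.exp (Complex.I * (n:ℂ) * (q:ℂ))) = ∫ q in (-π)..π, g q := by
    apply intervalIntegral.integral_congr
    intro q hq
    rw [Set.uIcc_of_le (by linarith : -π ≤ π)] at hq
    have h1 : Complex.exp (Complex.I * (k:ℂ) * ((u q : ℝ) : ℂ))
        = Complex.exp (((u q : ℝ) : ℂ) * I) ^ K := by
      rw [show Complex.I * (k:ℂ) * ((u q : ℝ):ℂ) = (k:ℂ) * (((u q : ℝ):ℂ) * I) by ring, hKk]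
      push_cast
      rw [Complex.exp_nat_mul]
    have h2 : Complex.exp (Complex.I * (n:ℂ) * (q:ℂ))
        = Complex.exp ((q:ℂ) * I) ^ (M + 1) := by
      rw [show Complex.I * (n:ℂ) * (q:ℂ) = (n:ℂ) * ((q:ℂ) * I) by ring, hMn]
      push_cast
      rw [show ((M:ℂ) + 1) * ((q:ℂ) * I) = ((M+1 : ℕ):ℂ) * ((q:ℂ) * I) by push_cast; ring]
      rw [Complex.exp_nat_mul]
    have hu : u q = (if q = π then π else if q = -π then -π
        else 2 * Real.arctan (L * Real.tan (q / 2))) := rfl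
    have hkey := key_identity hL0 hL1 hq.1 hq.2
    show Complex.exp (Complex.I * (k:ℂ) * ((u q : ℝ) : ℂ))
        * Complex.exp (Complex.I * (n:ℂ) * (q:ℂ)) = g q
    rw [h1, h2, hg]
    simp only [hnum, hden]
    rw [hu, hkey]
  -- Step 2: shift the interval using periodicity
  have hper : Function.Periodic g (2 * π) := by
    intro x
    have hexp : Complex.exp (((x + 2*π : ℝ):ℂ) * I) = Complex.exp ((x:ℂ) * I) := by
      push_cast
      rw [add_mul, Complex.exp_add, Complex.exp_two_pi_mul_I, mul_one]
    simp only [hg, hexp]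
  have step2 : (∫ q in (-π)..π, g q) = ∫ q in (0:ℝ)..(2*π), g q := by
    have h := hper.intervalIntegral_add_eq (-π) 0
    rw [show -π + 2*π = π by ring, zero_add] at h
    exact h
  -- Step 3: the integral is a circle integral
  set h : ℂ → ℂ := fun z => -I * ((num z / den z) ^ K * z ^ M) with hh
  have step3 : (∫ q in (0:ℝ)..(2*π), g q) = ∮ z in C((0:ℂ), 1), h z := by
    rw [circleIntegral]
    apply intervalIntegral.integral_congr
    intro θ hθ
    have hc : circleMap 0 1 θ = Complex.exp ((θ:ℂ) * I) := by
      simp [circleMap]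
    show g θ = deriv (circleMap 0 1) θ • h (circleMap 0 1 θ)
    symm
    rw [deriv_circleMap, hc, smul_eq_mul, hg, hh]
    set e := Complex.exp ((θ:ℂ) * I) with he
    set X := (num e / den e) ^ K with hX
    rw [show e * I * (-I * (X * e ^ M)) = (I * I) * (-(X * (e ^ M * e))) by ring,
      Complex.I_mul_I, ← pow_succ]
    ring
  -- Step 4: the circle integral vanishes by Cauchy's theorem
  have hdiff : ∀ z : ℂ, ‖z‖ ≤ 1 → DifferentiableAt ℂ h z := by
    intro z hz
    have hdz : den z ≠ 0 := hden_ne z hz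
    have h1 : DifferentiableAt ℂ num z := by
      simp only [hnum]
      exact (differentiableAt_id.const_mul _).add_const _
    have h2 : DifferentiableAt ℂ den z := by
      simp only [hden]
      exact (differentiableAt_id.const_mul _).add_const _
    exact (((h1.div h2 hdz).pow K).mul (differentiableAt_id.pow M)).const_mul _
  have step4 : (∮ z in C((0:ℂ), 1), h z) = 0 := by
    apply circleIntegral_eq_zero_of_differentiable_on_off_countable
      (zero_le_one) (Set.countable_empty)
    · intro z hz
      rw [Metric.mem_closedBall, dist_zero_right] at hz
      exact (hdiff z (by simpa using hz)).continuousAt.continuousWithinAt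
    · intro z hz
      have hz' : ‖z‖ ≤ 1 := by
        have := hz.1
        rw [Metric.mem_ball, dist_zero_right] at this
        simpa using this.le
      exact hdiff z hz'
  rw [step1, step2, step3, step4]
end
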